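/- Let X₀ be integrable and F₀ a sub-σ-algebra, and let X_k be an integrable random variable. Then E|X₀ · E(X_k|F₀)| = Cov( |X₀|·(1_{E(X_k|F₀)>0} − 1_{E(X_k|F₀)≤0}), X_k ), provided X₀ is F₀-measurable and X_k is centered. -/

import Mathlib

open MeasureTheory ProbabilityTheory

noncomputable section

def cov {Ω : Type*} [MeasurableSpace Ω] (μ : Measure Ω) (U V : Ω → ℝ) : ℝ :=
  (∫ ω, U ω * V ω ∂μ) - (∫ ω, U ω ∂μ) * (∫ ω, V ω ∂μ)

/-- Identity (6.1) of Dedecker–Rio (2000):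
`E|X₀ E(X_k|F₀)| = Cov(|X₀|(1_{E(X_k|F₀)>0} - 1_{E(X_k|F₀)≤0}), X_k)`. -/
theorem stmt3 {Ω : Type*} [m : MeasurableSpace Ω] (μ : Measure Ω) [IsProbabilityMeasure μ]
    (F₀ : MeasurableSpace Ω) (hF₀ : F₀ ≤ m)
    (X₀ Xk : Ω → ℝ)
    (hX₀meas : Measurable[F₀] X₀)
    (hX₀int : Integrable X₀ μ) (hXkint : Integrable Xk μ)
    (hXkc : ∫ ω, Xk ω ∂μ = 0)
    (hprod : Integrable (fun ω => X₀ ω * (μ[Xk|F₀]) ω) μ)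
    (hprod' : Integrable (fun ω => |X₀ ω| * Xk ω) μ) :
    ∫ ω, |X₀ ω * (μ[Xk|F₀]) ω| ∂μ =
      @cov Ω m μ
        (fun ω => |X₀ ω| * (if (μ[Xk|F₀]) ω > 0 then (1 : ℝ) else -1)) Xk := by
  set E : Ω → ℝ := μ[Xk|F₀] with hE
  set U : Ω → ℝ := fun ω => |X₀ ω| * (if E ω > 0 then (1 : ℝ) else -1) with hU
  have hEsm : StronglyMeasurable[F₀] E := stronglyMeasurable_condExp
  have hSset : MeasurableSet[F₀] {ω | E ω > 0} :=
    measurableSet_lt measurable_const hEsm.measurable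
  have hUsm : StronglyMeasurable[F₀] U :=
    (hX₀meas.abs.mul (Measurable.ite hSset measurable_const measurable_const)).stronglyMeasurable
  -- pointwise: |X₀ ω * E ω| = U ω * E ω
  have hpt : ∀ ω, |X₀ ω * E ω| = U ω * E ω := by
    intro ω
    rw [abs_mul, hU]
    by_cases h : E ω > 0
    · simp [h, abs_of_pos h]
    · push_neg at h
      simp [if_neg (not_lt.2 h), abs_of_nonpos h]
  have habs : ∀ ω, ‖U ω * Xk ω‖ = ‖|X₀ ω| * Xk ω‖ := by
    intro ω
    simp only [norm_mul, hU, Real.norm_eq_abs, abs_abs, abs_mul]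
    by_cases h : E ω > 0 <;> simp [h]
  have hUXk : Integrable (fun ω => U ω * Xk ω) μ := by
    refine Integrable.mono' hprod'.norm ?_ ?_
    · exact ((hUsm.mono hF₀).aestronglyMeasurable.mul hXkint.aestronglyMeasurable)
    · exact Filter.Eventually.of_forall fun ω => le_of_eq (habs ω)
  have hUE : Integrable (fun ω => U ω * E ω) μ := by
    refine Integrable.mono' hprod.norm ?_ ?_
    · exact ((hUsm.mono hF₀).aestronglyMeasurable.mul
        (hEsm.mono hF₀).aestronglyMeasurable)
    · refine Filter.Eventually.of_forall fun ω => ?_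
      rw [← hpt ω]
      simp [abs_mul]
  have hcond : μ[(fun ω => U ω * Xk ω)|F₀] =ᵐ[μ] fun ω => U ω * E ω := by
    have := condExp_mul_of_stronglyMeasurable_left hUsm (f := U) (g := Xk) hUXk hXkint
    exact this
  have key : ∫ ω, U ω * E ω ∂μ = ∫ ω, U ω * Xk ω ∂μ := by
    rw [← integral_congr_ae hcond, integral_condExp hF₀]
  simp only [cov, hXkc, mul_zero, sub_zero]
  calc ∫ ω, |X₀ ω * E ω| ∂μ = ∫ ω, U ω * E ω ∂μ := by
        exact integral_congr_ae (Filter.Eventually.of_forall fun ω => hpt ω)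
    _ = ∫ ω, U ω * Xk ω ∂μ := key
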